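/- For n ≥ 2 and C > 0, the function v on H^n defined in polar coordinates (r, θ, φ₁, …, φ_{n−2}) centered at o by v(r,θ) = (C(n−1)/2) · (∫₀^r (sinh s)^{n−1} ds / (sinh r)^{n−1}) · cos θ is harmonic: it satisfies ∂²v/∂r² + (n−1) coth r · ∂v/∂r + (n−2)(cot θ/sinh²r) ∂v/∂θ + (1/sinh²r) ∂²v/∂θ² = 0 for r > 0. -/

import Mathlib

open Real Filter

theorem harmonic_function_on_Hn (n : ℕ) (hn : 2 ≤ n) (C : ℝ) (hC : 0 < C) (v : ℝ → ℝ → ℝ)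
    (hv : ∀ r θ, v r θ =
      C * ((n : ℝ) - 1) / 2 *
        ((∫ s in (0:ℝ)..r, Real.sinh s ^ (n - 1)) / Real.sinh r ^ (n - 1)) * Real.cos θ) :
    ∀ r > (0:ℝ), ∀ θ : ℝ, Real.sin θ ≠ 0 →
      deriv (fun s => deriv (fun s' => v s' θ) s) r
        + ((n : ℝ) - 1) * (Real.cosh r / Real.sinh r) * deriv (fun s => v s θ) r
        + ((n : ℝ) - 2) * (Real.cos θ / Real.sin θ / Real.sinh r ^ 2) *
            deriv (fun φ => v r φ) θ
        + 1 / Real.sinh r ^ 2 * deriv (fun φ => deriv (fun φ' => v r φ') φ) θ = 0 := by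
  intro r hr θ hθ
  obtain ⟨m, rfl⟩ : ∃ m, n = m + 1 := ⟨n - 1, by omega⟩
  have hm : 1 ≤ m := by omega
  set F : ℝ → ℝ := fun s => ∫ t in (0:ℝ)..s, Real.sinh t ^ m with hF_def
  have hF : ∀ s : ℝ, HasDerivAt F (Real.sinh s ^ m) s := by
    intro s
    have hc : Continuous fun t => Real.sinh t ^ m := Real.continuous_sinh.pow m
    exact intervalIntegral.integral_hasDerivAt_right (hc.intervalIntegrable _ _)
      (hc.stronglyMeasurableAtFilter _ _) hc.continuousAt
  set g : ℝ → ℝ := fun s => F s / Real.sinh s ^ m with hg_def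
  have hg : ∀ s : ℝ, 0 < s →
      HasDerivAt g (1 - (m : ℝ) * (Real.cosh s / Real.sinh s) * g s) s := by
    intro s hs
    have hsinh : 0 < Real.sinh s := Real.sinh_pos_iff.2 hs
    have hpow : HasDerivAt (fun x => Real.sinh x ^ m)
        ((m : ℝ) * Real.sinh s ^ (m - 1) * Real.cosh s) s :=
      (Real.hasDerivAt_sinh s).pow m
    have hq : HasDerivAt g _ s := (hF s).div hpow (pow_ne_zero m hsinh.ne')
    convert hq using 1
    have hps : Real.sinh s ^ m = Real.sinh s ^ (m - 1) * Real.sinh s := by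
      rw [← pow_succ]; congr 1; omega
    rw [hg_def]
    field_simp
    rw [hps]
    ring
  set K : ℝ := C * ((↑(m + 1) : ℝ) - 1) / 2 with hK_def
  -- v as K * g * cos
  have hv' : ∀ s φ, v s φ = K * g s * Real.cos φ := by
    intro s φ
    rw [hv s φ]
    simp [hK_def, hg_def, hF_def, Nat.add_sub_cancel]
  have hsinh : 0 < Real.sinh r := Real.sinh_pos_iff.2 hr
  -- θ derivatives
  have hθ1 : deriv (fun φ => v r φ) θ = (K * g r) * (-Real.sin θ) := by
    have : (fun φ => v r φ) = fun φ => K * g r * Real.cos φ := funext fun φ => hv' r φ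
    rw [this]
    exact ((Real.hasDerivAt_cos θ).const_mul (K * g r)).deriv
  have hθ2 : deriv (fun φ => deriv (fun φ' => v r φ') φ) θ = (K * g r) * (-Real.cos θ) := by
    have h1 : (fun φ => deriv (fun φ' => v r φ') φ) = fun φ => (K * g r) * (-Real.sin φ) := by
      funext φ
      have : (fun φ' => v r φ') = fun φ' => K * g r * Real.cos φ' := funext fun φ' => hv' r φ'
      rw [this]
      exact ((Real.hasDerivAt_cos φ).const_mul (K * g r)).deriv
    rw [h1]
    have : HasDerivAt (fun φ => (K * g r) * (-Real.sin φ)) ((K * g r) * (-Real.cos θ)) θ := by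
      simpa using ((Real.hasDerivAt_sin θ).neg.const_mul (K * g r))
    exact this.deriv
  -- first r derivative as a function on (0, ∞)
  have hr1 : ∀ s : ℝ, 0 < s → deriv (fun s' => v s' θ) s
      = K * Real.cos θ * (1 - (m : ℝ) * (Real.cosh s / Real.sinh s) * g s) := by
    intro s hs
    have h1 : (fun s' => v s' θ) = fun s' => K * g s' * Real.cos θ := funext fun s' => hv' s' θ
    rw [h1]
    have := (((hg s hs).const_mul K).mul_const (Real.cos θ)).deriv
    rw [this]; ring
  -- second r derivative
  have hev : (fun s => deriv (fun s' => v s' θ) s)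
      =ᶠ[nhds r] fun s => K * Real.cos θ * (1 - (m : ℝ) * (Real.cosh s / Real.sinh s) * g s) := by
    filter_upwards [eventually_gt_nhds hr] with s hs using hr1 s hs
  have hcoth : HasDerivAt (fun s => Real.cosh s / Real.sinh s)
      ((Real.sinh r * Real.sinh r - Real.cosh r * Real.cosh r) / Real.sinh r ^ 2) r :=
    (Real.hasDerivAt_cosh r).div (Real.hasDerivAt_sinh r) hsinh.ne'
  have hprod : HasDerivAt (fun s => Real.cosh s / Real.sinh s * g s)
      ((Real.sinh r * Real.sinh r - Real.cosh r * Real.cosh r) / Real.sinh r ^ 2 * g r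
        + Real.cosh r / Real.sinh r * (1 - (m : ℝ) * (Real.cosh r / Real.sinh r) * g r)) r :=
    hcoth.mul (hg r hr)
  have hr2 : deriv (fun s => deriv (fun s' => v s' θ) s) r
      = K * Real.cos θ * (0 - (m : ℝ) *
          ((Real.sinh r * Real.sinh r - Real.cosh r * Real.cosh r) / Real.sinh r ^ 2 * g r
            + Real.cosh r / Real.sinh r * (1 - (m : ℝ) * (Real.cosh r / Real.sinh r) * g r))) := by
    rw [hev.deriv_eq]
    have : HasDerivAt (fun s => K * Real.cos θ *
        (1 - (m : ℝ) * (Real.cosh s / Real.sinh s) * g s))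
        (K * Real.cos θ * (0 - (m : ℝ) *
          ((Real.sinh r * Real.sinh r - Real.cosh r * Real.cosh r) / Real.sinh r ^ 2 * g r
            + Real.cosh r / Real.sinh r * (1 - (m : ℝ) * (Real.cosh r / Real.sinh r) * g r)))) r := by
      have h2 : HasDerivAt (fun s => (m : ℝ) * (Real.cosh s / Real.sinh s * g s))
          ((m : ℝ) * ((Real.sinh r * Real.sinh r - Real.cosh r * Real.cosh r) / Real.sinh r ^ 2 * g r
            + Real.cosh r / Real.sinh r * (1 - (m : ℝ) * (Real.cosh r / Real.sinh r) * g r))) r :=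
        hprod.const_mul _
      have h3 := ((hasDerivAt_const r (1:ℝ)).sub h2).const_mul (K * Real.cos θ)
      convert h3 using 2
      · rfl
      · rfl
      · simp only [Pi.sub_apply]; ring
    exact this.deriv
  rw [hr2, hr1 r hr, hθ1, hθ2]
  have hc2 : Real.cosh r ^ 2 = Real.sinh r ^ 2 + 1 := Real.cosh_sq r
  rw [show Real.cosh r * Real.cosh r = Real.sinh r ^ 2 + 1 from by rw [← sq]; exact hc2]
  push_cast
  field_simp
  ring
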